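/- Let G=(V,E) be a correlation clustering instance with |V|=n and let ρ ≥ 1. If a clustering 𝒞_ALG satisfies cost^k_{𝒞_ALG} ≤ ρ·min_{𝒞} cost^k_{𝒞} simultaneously for every integer k∈[n] (i.e., it is a ρ-approximation for all top-k norm objectives), then for every monotone symmetric norm f:ℝ^n_{≥0}→ℝ_{≥0}, f(cost_{𝒞_ALG}) ≤ ρ·min_{𝒞} f(cost_{𝒞}), where the minima are over all clusterings 𝒞 of V and cost_𝒞 denotes the disagreement vector of 𝒞. -/
import Mathlib


open Finset

attribute [local instance] Classical.propDecidable

noncomputable section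

variable {V : Type*}

/-- The neighborhood of `u` in the graph of `+`edges `E` (contains `u` itself,
since `E` contains all self-loops). -/
def Nbr [Fintype V] (E : V → V → Prop) (u : V) : Finset V :=
  Finset.univ.filter (fun v => E u v)

/-- The degree `d(u) = |N(u)|`. -/
def deg [Fintype V] (E : V → V → Prop) (u : V) : ℕ := (Nbr E u).card

/-- `M_{uv} = max (d(u), d(v))`. -/
def Mdeg [Fintype V] (E : V → V → Prop) (u v : V) : ℕ := max (deg E u) (deg E v)

/-- The pruned edge set `E_H = {uv ∈ E : |N(u) Δ N(v)| ≤ β · M_{uv}}`. -/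
def EH [Fintype V] (β : ℝ) (E : V → V → Prop) (u v : V) : Prop :=
  E u v ∧ ((symmDiff (Nbr E u) (Nbr E v)).card : ℝ) ≤ β * (Mdeg E u v : ℝ)

/-- The neighborhood of `u` in the pruned graph `H`. -/
def NH [Fintype V] (β : ℝ) (E : V → V → Prop) (u : V) : Finset V :=
  Finset.univ.filter (fun v => EH β E u v)

/-- The fractional solution: `x_{uu} = 0` and
`x_{uv} = 1 − |N_H(u) ∩ N_H(v)| / M_{uv}` for `u ≠ v`. -/
def xval [Fintype V] (β : ℝ) (E : V → V → Prop) (u v : V) : ℝ :=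
  if u = v then 0 else 1 - ((NH β E u ∩ NH β E v).card : ℝ) / (Mdeg E u v : ℝ)

/-- `cost_𝒞(u)`: the number of pairs incident to `u` in disagreement with respect
to the clustering `C` (given as a labelling function). -/
def costC [Fintype V] {α : Type*} (E : V → V → Prop) (C : V → α) (u : V) : ℕ :=
  (Finset.univ.filter
    (fun v => (E u v ∧ C u ≠ C v) ∨ (¬ E u v ∧ v ≠ u ∧ C u = C v))).card

/-- The top-`k` norm `cost^k_𝒞` of the disagreement vector of the clustering `C`:
the maximum of `∑_{u ∈ T} cost_𝒞(u)` over subsets `T ⊆ V` of size `k`. -/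
def costTopK [Fintype V] {α : Type*} (E : V → V → Prop) (C : V → α) (k : ℕ) : ℕ :=
  (Finset.powersetCard k (Finset.univ : Finset V)).sup (fun T => ∑ u ∈ T, costC E C u)

/-- A monotone symmetric norm on the nonnegative orthant of `ι → ℝ`:
it is nonnegative, positively homogeneous, subadditive, monotone, and invariant
under coordinate permutations (all conditions imposed on nonnegative vectors). -/
structure IsMonoSymNorm {ι : Type*} (f : (ι → ℝ) → ℝ) : Prop where
  nonneg : ∀ x : ι → ℝ, (∀ i, 0 ≤ x i) → 0 ≤ f x
  homog : ∀ (a : ℝ), 0 ≤ a → ∀ x : ι → ℝ, (∀ i, 0 ≤ x i) →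
    f (fun i => a * x i) = a * f x
  subadd : ∀ x y : ι → ℝ, (∀ i, 0 ≤ x i) → (∀ i, 0 ≤ y i) →
    f (fun i => x i + y i) ≤ f x + f y
  mono : ∀ x y : ι → ℝ, (∀ i, 0 ≤ x i) → (∀ i, x i ≤ y i) → f x ≤ f y
  symm : ∀ (σ : Equiv.Perm ι) (x : ι → ℝ), (∀ i, 0 ≤ x i) → f (fun i => x (σ i)) = f x

/-- The set of the first `m` indices of `Fin n`. -/
def FirstK (n m : ℕ) : Finset (Fin n) := Finset.univ.filter (fun i => (i : ℕ) < m)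

lemma mem_FirstK {n m : ℕ} {i : Fin n} : i ∈ FirstK n m ↔ (i : ℕ) < m := by
  simp [FirstK]

lemma card_FirstK (n m : ℕ) : (FirstK n m).card = min m n := by
  have h : (FirstK n m).card = ((Finset.range n).filter (· < m)).card := by
    refine Finset.card_bij (fun i _ => (i : ℕ)) ?_ ?_ ?_
    · intro a ha; simp only [Finset.mem_filter, Finset.mem_range]
      exact ⟨a.isLt, mem_FirstK.mp ha⟩
    · intro a _ b _ h; exact Fin.val_injective h
    · intro b hb; simp only [Finset.mem_filter, Finset.mem_range] at hb
      exact ⟨⟨b, hb.1⟩, mem_FirstK.mpr hb.2, rfl⟩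
  rw [h]
  have : (Finset.range n).filter (· < m) = Finset.range (min m n) := by
    ext a; simp only [Finset.mem_filter, Finset.mem_range, lt_min_iff]; tauto
  rw [this, Finset.card_range]

/-- Sum over any set is at most the sum over the first `card` indices,
for an antitone vector. -/
lemma sum_le_sum_firstK {n : ℕ} {w : Fin n → ℝ} (hw : Antitone w) (S : Finset (Fin n)) :
    ∑ i ∈ S, w i ≤ ∑ i ∈ FirstK n S.card, w i := by
  set T := FirstK n S.card with hT
  have hcardT : T.card = S.card := by
    rw [hT, card_FirstK]
    exact min_eq_left (by simpa using Finset.card_le_card (Finset.subset_univ S))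
  have hcd : (S \ T).card = (T \ S).card := by
    have h1 := Finset.card_inter_add_card_sdiff S T
    have h2 := Finset.card_inter_add_card_sdiff T S
    rw [Finset.inter_comm] at h2
    omega
  have key : ∑ i ∈ S \ T, w i ≤ ∑ i ∈ T \ S, w i := by
    let g := Finset.equivOfCardEq hcd
    rw [← Finset.sum_coe_sort (S \ T), ← Finset.sum_coe_sort (T \ S),
      ← Equiv.sum_comp g (fun b : {x // x ∈ T \ S} => w b)]
    apply Finset.sum_le_sum
    intro a _
    apply hw
    have ha : ¬ ((a : Fin n) : ℕ) < S.card := by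
      have := a.2; rw [Finset.mem_sdiff] at this
      intro h; exact this.2 (mem_FirstK.mpr h)
    have hb : (((g a : {x // x ∈ T \ S}) : Fin n) : ℕ) < S.card := by
      have := (g a).2; rw [Finset.mem_sdiff] at this
      exact mem_FirstK.mp this.1
    exact Fin.le_def.mpr (by omega)
  calc ∑ i ∈ S, w i = ∑ i ∈ S ∩ T, w i + ∑ i ∈ S \ T, w i :=
        (Finset.sum_inter_add_sum_sdiff S T w).symm
    _ ≤ ∑ i ∈ S ∩ T, w i + ∑ i ∈ T \ S, w i := by linarith
    _ = ∑ i ∈ T ∩ S, w i + ∑ i ∈ T \ S, w i := by rw [Finset.inter_comm]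
    _ = ∑ i ∈ T, w i := Finset.sum_inter_add_sum_sdiff T S w


/-- Transport of a monotone symmetric norm along an equivalence of index types. -/
lemma isMonoSymNorm_comp_equiv {ι κ : Type*} (e : ι ≃ κ) (f : (ι → ℝ) → ℝ)
    (hf : IsMonoSymNorm f) :
    IsMonoSymNorm (fun w : κ → ℝ => f (fun i => w (e i))) where
  nonneg w hw := hf.nonneg _ (fun i => hw (e i))
  homog a ha w hw := hf.homog a ha _ (fun i => hw (e i))
  subadd w v hw hv := hf.subadd _ _ (fun i => hw (e i)) (fun i => hv (e i))
  mono w v hw hwv := hf.mono _ _ (fun i => hw (e i)) (fun i => hwv (e i))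
  symm σ w hw := by
    have h := hf.symm ((e.trans σ).trans e.symm) (fun i => w (e i)) (fun i => hw (e i))
    simpa using h

/-- Core lemma: if `x` is antitone (sorted descending), both vectors are
nonnegative, and every prefix sum of `x` is at most the corresponding prefix sum
of `z`, then `f x ≤ f z` for any monotone symmetric norm `f`. -/
lemma core_majorization {n : ℕ} (f : (Fin n → ℝ) → ℝ) (hf : IsMonoSymNorm f) :
    ∀ (N : ℕ) (x z : Fin n → ℝ),
      (Finset.univ.filter (fun i => x i ≠ z i)).card ≤ N →
      Antitone x → (∀ i, 0 ≤ x i) → (∀ i, 0 ≤ z i) →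
      (∀ m : ℕ, m ≤ n → ∑ i ∈ FirstK n m, x i ≤ ∑ i ∈ FirstK n m, z i) →
      f x ≤ f z := by
  intro N
  induction N with
  | zero =>
    intro x z hcard _ _ _ _
    have : x = z := by
      funext i
      by_contra hne
      have : i ∈ Finset.univ.filter (fun i => x i ≠ z i) := by simp [hne]
      have := Finset.card_pos.mpr ⟨i, this⟩
      omega
    exact le_of_eq (congrArg f this)
  | succ N ih =>
    intro x z hcard hx hxpos hzpos hP
    by_cases hle : ∀ i, x i ≤ z i
    · exact hf.mono x z hxpos hle
    · push_neg at hle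
      -- K : indices where z < x ; k its minimum
      set K : Finset (Fin n) := Finset.univ.filter (fun i => z i < x i) with hK
      have hKne : K.Nonempty := by
        obtain ⟨i, hi⟩ := hle; exact ⟨i, by simp [hK, hi]⟩
      set k := K.min' hKne with hk
      have hkK : k ∈ K := K.min'_mem hKne
      have hzk : z k < x k := by simpa [hK] using hkK
      have hmin : ∀ i : Fin n, i < k → x i ≤ z i := by
        intro i hik
        by_contra h
        push_neg at h
        have : i ∈ K := by simp [hK, h]
        exact absurd (K.min'_le i this) (not_le.mpr hik)
      -- J : indices below k where x < z ; j its maximum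
      set J : Finset (Fin n) := Finset.univ.filter (fun i => i < k ∧ x i < z i) with hJ
      have hJne : J.Nonempty := by
        by_contra hJe
        rw [Finset.not_nonempty_iff_eq_empty] at hJe
        have hknotin : k ∉ FirstK n (k : ℕ) := by simp [mem_FirstK]
        have hins : FirstK n ((k : ℕ) + 1) = insert k (FirstK n (k : ℕ)) := by
          ext i
          simp only [mem_FirstK, Finset.mem_insert]
          constructor
          · intro h
            rcases Nat.lt_succ_iff_lt_or_eq.mp h with h | h
            · exact Or.inr h
            · exact Or.inl (Fin.val_injective h)
          · rintro (rfl | h)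
            · omega
            · omega
        have hsum := hP ((k : ℕ) + 1) (by omega)
        rw [hins, Finset.sum_insert hknotin, Finset.sum_insert hknotin] at hsum
        have hrest : ∑ i ∈ FirstK n (k : ℕ), z i ≤ ∑ i ∈ FirstK n (k : ℕ), x i := by
          apply Finset.sum_le_sum
          intro i hi
          have hik : i < k := Fin.lt_def.mpr (mem_FirstK.mp hi)
          by_contra hlt
          push_neg at hlt
          have : i ∈ J := by simp [hJ, hik, hlt]
          simp [hJe] at this
        linarith
      set j := J.max' hJne with hj
      have hjJ : j ∈ J := J.max'_mem hJne
      have hjk : j < k := by simpa [hJ] using (Finset.mem_filter.mp hjJ).2.1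
      have hxj : x j < z j := (Finset.mem_filter.mp hjJ).2.2
      have hjne : j ≠ k := ne_of_lt hjk
      -- δ
      set δ : ℝ := min (z j - x j) (x k - z k) with hδ
      have hδpos : 0 < δ := lt_min (by linarith) (by linarith)
      have hδ1 : δ ≤ z j - x j := min_le_left _ _
      have hδ2 : δ ≤ x k - z k := min_le_right _ _
      have hxjk : x k ≤ x j := hx (le_of_lt hjk)
      have hzjk : 0 < z j - z k := by linarith
      have hδ3 : δ ≤ z j - z k := by linarith
      -- the transformed vector
      set z' : Fin n → ℝ := fun i =>
        z i + (if i = j then -δ else 0) + (if i = k then δ else 0) with hz'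
      have hz'j : z' j = z j - δ := by simp [hz', hjne]; ring
      have hz'k : z' k = z k + δ := by simp [hz', hjne.symm]
      have hz'other : ∀ i, i ≠ j → i ≠ k → z' i = z i := by
        intro i h1 h2; simp [hz', h1, h2]
      have hz'pos : ∀ i, 0 ≤ z' i := by
        intro i
        by_cases h1 : i = j
        · rw [h1, hz'j]; have := hxpos j; linarith
        · by_cases h2 : i = k
          · rw [h2, hz'k]; have := hzpos k; linarith
          · rw [hz'other i h1 h2]; exact hzpos i
      -- sum formula for z'
      have hz'sum : ∀ S : Finset (Fin n), ∑ i ∈ S, z' i =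
          ∑ i ∈ S, z i + (if j ∈ S then -δ else 0) + (if k ∈ S then δ else 0) := by
        intro S
        rw [hz']
        rw [Finset.sum_add_distrib, Finset.sum_add_distrib,
          Finset.sum_ite_eq' S j (fun _ => -δ), Finset.sum_ite_eq' S k (fun _ => δ)]
      -- prefix sums still dominate
      have hP' : ∀ m : ℕ, m ≤ n → ∑ i ∈ FirstK n m, x i ≤ ∑ i ∈ FirstK n m, z' i := by
        intro m hm
        rw [hz'sum]
        by_cases hkm : (k : ℕ) < m
        · have hjm : (j : ℕ) < m := by have := Fin.lt_def.mp hjk; omega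
          rw [if_pos (mem_FirstK.mpr hjm), if_pos (mem_FirstK.mpr hkm)]
          have := hP m hm
          linarith
        · rw [if_neg (fun h => hkm (mem_FirstK.mp h))]
          by_cases hjm : (j : ℕ) < m
          · rw [if_pos (mem_FirstK.mpr hjm)]
            -- need: Σ x ≤ Σ z - δ on FirstK m
            have hjmem : j ∈ FirstK n m := mem_FirstK.mpr hjm
            have hterm : ∀ i ∈ FirstK n m, 0 ≤ z i - x i := by
              intro i hi
              have : (i : ℕ) < m := mem_FirstK.mp hi
              have hik : i < k := Fin.lt_def.mpr (by omega)
              have := hmin i hik; linarith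
            have hsingle : z j - x j ≤ ∑ i ∈ FirstK n m, (z i - x i) :=
              Finset.single_le_sum hterm hjmem
            rw [Finset.sum_sub_distrib] at hsingle
            linarith
          · rw [if_neg (fun h => hjm (mem_FirstK.mp h))]
            have := hP m hm; linarith
      -- difference set strictly decreases
      have hsub : (Finset.univ.filter (fun i => x i ≠ z' i)) ⊂
          (Finset.univ.filter (fun i => x i ≠ z i)) := by
        constructor
        · intro i hi
          simp only [Finset.mem_filter, Finset.mem_univ, true_and] at hi ⊢
          intro heq
          have hij : i ≠ j := fun h => by rw [h] at heq; linarith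
          have hik : i ≠ k := fun h => by rw [h] at heq; linarith
          exact hi (heq.trans (hz'other i hij hik).symm)
        · intro hsup
          rcases min_cases (z j - x j) (x k - z k) with ⟨he, _⟩ | ⟨he, _⟩
          · have : x j = z' j := by rw [hz'j, ← hδ] at *; rw [he]; ring
            have hjin : j ∈ Finset.univ.filter (fun i => x i ≠ z i) := by
              simp [ne_of_lt hxj]
            have := hsup hjin
            simp only [Finset.mem_filter, Finset.mem_univ, true_and] at this
            exact this ‹x j = z' j›
          · have : x k = z' k := by rw [hz'k, ← hδ] at *; rw [he]; ring
            have hkin : k ∈ Finset.univ.filter (fun i => x i ≠ z i) := by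
              simp [ne_of_gt hzk, (ne_of_gt hzk).symm]
            have := hsup hkin
            simp only [Finset.mem_filter, Finset.mem_univ, true_and] at this
            exact this ‹x k = z' k›
      have hcard' : (Finset.univ.filter (fun i => x i ≠ z' i)).card ≤ N := by
        have := Finset.card_lt_card hsub
        omega
      have h1 : f x ≤ f z' := ih x z' hcard' hx hxpos hz'pos hP'
      -- f z' ≤ f z via convex combination with a transposition
      set t : ℝ := δ / (z j - z k) with ht
      have ht0 : 0 ≤ t := le_of_lt (div_pos hδpos hzjk)
      have ht1 : t ≤ 1 := (div_le_one hzjk).mpr hδ3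
      have htδ : t * (z j - z k) = δ := div_mul_cancel₀ δ (ne_of_gt hzjk)
      have hcomb : z' = fun i => (1 - t) * z i + t * z (Equiv.swap j k i) := by
        funext i
        by_cases h1 : i = j
        · rw [h1, hz'j, Equiv.swap_apply_left]; linarith [htδ]
        · by_cases h2 : i = k
          · rw [h2, hz'k, Equiv.swap_apply_right]; linarith [htδ]
          · rw [hz'other i h1 h2, Equiv.swap_apply_of_ne_of_ne h1 h2]; ring
      have h2 : f z' ≤ f z := by
        rw [hcomb]
        have hs1 : ∀ i, 0 ≤ (1 - t) * z i := fun i => mul_nonneg (by linarith) (hzpos i)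
        have hs2 : ∀ i, 0 ≤ t * z (Equiv.swap j k i) :=
          fun i => mul_nonneg ht0 (hzpos _)
        calc f (fun i => (1 - t) * z i + t * z (Equiv.swap j k i))
            ≤ f (fun i => (1 - t) * z i) + f (fun i => t * z (Equiv.swap j k i)) :=
              hf.subadd _ _ hs1 hs2
          _ = (1 - t) * f z + t * f (fun i => z (Equiv.swap j k i)) := by
              rw [hf.homog (1 - t) (by linarith) z hzpos,
                hf.homog t ht0 (fun i => z (Equiv.swap j k i)) (fun i => hzpos _)]
          _ = (1 - t) * f z + t * f z := by
              rw [hf.symm (Equiv.swap j k) z hzpos]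
          _ = f z := by ring
      exact le_trans h1 h2


/-- Key lemma: weak submajorization (every subset-sum of `x` is dominated by some
equal-size subset-sum of `z`) implies domination for every monotone symmetric norm. -/
lemma norm_le_of_submajorize {ι : Type*} [Fintype ι] (f : (ι → ℝ) → ℝ)
    (hf : IsMonoSymNorm f) (x z : ι → ℝ) (hx : ∀ i, 0 ≤ x i) (hz : ∀ i, 0 ≤ z i)
    (hw : ∀ T : Finset ι, ∃ S : Finset ι,
      S.card = T.card ∧ ∑ i ∈ T, x i ≤ ∑ i ∈ S, z i) :
    f x ≤ f z := by
  set n := Fintype.card ι with hn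
  set e : ι ≃ Fin n := Fintype.equivFin ι with he
  set F : (Fin n → ℝ) → ℝ := fun w => f (fun i => w (e i)) with hF
  have hFnorm : IsMonoSymNorm F := isMonoSymNorm_comp_equiv e f hf
  set σx := Tuple.sort (fun i => -(x (e.symm i))) with hσx
  set σz := Tuple.sort (fun i => -(z (e.symm i))) with hσz
  set xs : Fin n → ℝ := fun i => x (e.symm (σx i)) with hxs
  set zs : Fin n → ℝ := fun i => z (e.symm (σz i)) with hzs
  have hxs_anti : Antitone xs := by
    intro a b hab
    have := Tuple.monotone_sort (fun i => -(x (e.symm i))) hab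
    simp only [Function.comp_apply] at this
    simpa [hxs] using this
  have hzs_anti : Antitone zs := by
    intro a b hab
    have := Tuple.monotone_sort (fun i => -(z (e.symm i))) hab
    simp only [Function.comp_apply] at this
    simpa [hzs] using this
  have hxs_pos : ∀ i, 0 ≤ xs i := fun i => hx _
  have hzs_pos : ∀ i, 0 ≤ zs i := fun i => hz _
  have hfx : F xs = f x := by
    have h := hf.symm ((e.trans σx).trans e.symm) x hx
    simpa [hF, hxs] using h
  have hfz : F zs = f z := by
    have h := hf.symm ((e.trans σz).trans e.symm) z hz
    simpa [hF, hzs] using h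
  have hP : ∀ m : ℕ, m ≤ n → ∑ i ∈ FirstK n m, xs i ≤ ∑ i ∈ FirstK n m, zs i := by
    intro m hm
    have hginj : Function.Injective (fun i : Fin n => e.symm (σx i)) :=
      fun a b hab => σx.injective (e.symm.injective hab)
    have h1 : ∑ i ∈ FirstK n m, xs i = ∑ a ∈ (FirstK n m).image (fun i => e.symm (σx i)), x a := by
      rw [Finset.sum_image (fun a _ b _ h => hginj h)]
    obtain ⟨S, hScard, hSle⟩ := hw ((FirstK n m).image (fun i => e.symm (σx i)))
    have hcardim : ((FirstK n m).image (fun i => e.symm (σx i))).card = m := by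
      rw [Finset.card_image_of_injective _ hginj, card_FirstK]
      omega
    have hg'inj : Function.Injective (fun a : ι => σz.symm (e a)) :=
      fun a b hab => e.injective (σz.symm.injective hab)
    have h2 : ∑ a ∈ S, z a = ∑ i ∈ S.image (fun a => σz.symm (e a)), zs i := by
      rw [Finset.sum_image (fun a _ b _ h => hg'inj h)]
      apply Finset.sum_congr rfl
      intro a _
      simp [hzs]
    have h3 : ∑ i ∈ S.image (fun a => σz.symm (e a)), zs i ≤
        ∑ i ∈ FirstK n (S.image (fun a => σz.symm (e a))).card, zs i :=
      sum_le_sum_firstK hzs_anti _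
    have hcard2 : (S.image (fun a => σz.symm (e a))).card = m := by
      rw [Finset.card_image_of_injective _ hg'inj, hScard, hcardim]
    rw [hcard2] at h3
    rw [h1]
    calc ∑ a ∈ (FirstK n m).image (fun i => e.symm (σx i)), x a
        ≤ ∑ a ∈ S, z a := hSle
      _ = ∑ i ∈ S.image (fun a => σz.symm (e a)), zs i := h2
      _ ≤ ∑ i ∈ FirstK n m, zs i := h3
  have := core_majorization F hFnorm
    ((Finset.univ.filter (fun i => xs i ≠ zs i)).card) xs zs le_rfl
    hxs_anti hxs_pos hzs_pos hP
  rw [hfx, hfz] at this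
  exact this

/-- If a clustering `𝒞_ALG` is simultaneously a `ρ`-approximation
for every top-`k` norm objective (`k ∈ [n]`), then it is a `ρ`-approximation for
every monotone symmetric norm `f` of the disagreement vector. -/
theorem topK_approx_implies_all_norm_approx [Fintype V] (E : V → V → Prop)
    (hsymm : ∀ u v, E u v → E v u) (hrefl : ∀ u, E u u)
    (ρ : ℝ) (hρ : 1 ≤ ρ) (CALG : V → ℕ)
    (happrox : ∀ k : ℕ, 1 ≤ k → k ≤ Fintype.card V → ∀ D : V → ℕ,
      (costTopK E CALG k : ℝ) ≤ ρ * (costTopK E D k : ℝ)) :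
    ∀ f : (V → ℝ) → ℝ, IsMonoSymNorm f → ∀ D : V → ℕ,
      f (fun u => (costC E CALG u : ℝ)) ≤ ρ * f (fun u => (costC E D u : ℝ)) := by
  intro f hf D
  have hρ0 : (0 : ℝ) ≤ ρ := by linarith
  set x : V → ℝ := fun u => (costC E CALG u : ℝ) with hx
  set y : V → ℝ := fun u => (costC E D u : ℝ) with hy
  set z : V → ℝ := fun u => ρ * y u with hz
  have hxpos : ∀ u, 0 ≤ x u := fun u => Nat.cast_nonneg _
  have hypos : ∀ u, 0 ≤ y u := fun u => Nat.cast_nonneg _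
  have hzpos : ∀ u, 0 ≤ z u := fun u => mul_nonneg hρ0 (hypos u)
  have hw : ∀ T : Finset V, ∃ S : Finset V,
      S.card = T.card ∧ ∑ u ∈ T, x u ≤ ∑ u ∈ S, z u := by
    intro T
    rcases Nat.eq_zero_or_pos T.card with h0 | hpos
    · refine ⟨∅, by simp [h0], ?_⟩
      rw [Finset.card_eq_zero.mp h0]
      simp
    · set k := T.card with hk
      have hkn : k ≤ Fintype.card V := by
        simpa using Finset.card_le_card (Finset.subset_univ T)
      -- T achieves at most costTopK CALG k
      have h1 : (∑ u ∈ T, costC E CALG u : ℕ) ≤ costTopK E CALG k := by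
        unfold costTopK
        exact Finset.le_sup (f := fun T => ∑ u ∈ T, costC E CALG u)
          (Finset.mem_powersetCard.mpr ⟨Finset.subset_univ T, rfl⟩)
      -- costTopK D k is attained by some S
      have hne : (Finset.powersetCard k (Finset.univ : Finset V)).Nonempty := by
        rw [Finset.powersetCard_nonempty]
        simpa using hkn
      obtain ⟨S, hSmem, hSeq⟩ := Finset.exists_mem_eq_sup _ hne
        (fun T => ∑ u ∈ T, costC E D u)
      rw [Finset.mem_powersetCard] at hSmem
      refine ⟨S, hSmem.2, ?_⟩
      have h2 := happrox k hpos hkn D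
      have hcast1 : ∑ u ∈ T, x u = ((∑ u ∈ T, costC E CALG u : ℕ) : ℝ) := by
        push_cast [hx]; rfl
      have hcast2 : ((costTopK E D k : ℕ) : ℝ) = ∑ u ∈ S, y u := by
        rw [costTopK, hSeq]
        push_cast [hy]
        rfl
      have h3 : ∑ u ∈ S, z u = ρ * ∑ u ∈ S, y u := by
        rw [hz, Finset.mul_sum]
      rw [hcast1, h3, ← hcast2]
      calc ((∑ u ∈ T, costC E CALG u : ℕ) : ℝ)
          ≤ (costTopK E CALG k : ℝ) := by exact_mod_cast h1
        _ ≤ ρ * (costTopK E D k : ℝ) := h2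
  have hmain := norm_le_of_submajorize f hf x z hxpos hzpos hw
  have hfinal : f z = ρ * f y := hf.homog ρ hρ0 y hypos
  rw [hfinal] at hmain
  exact hmain

end
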